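/- Let X be a square-integrable real random variable and R, b ∈ ℝ. Then E[(X − R)²] − E[(|X − b| + b − R)²] = 4·(R − b)·E[max(b − X, 0)]. -/

import Mathlib

open MeasureTheory

theorem flooding_mse_reduction_formula
    {Ω : Type*} [MeasurableSpace Ω] (μ : Measure Ω) [IsProbabilityMeasure μ]
    (X : Ω → ℝ) (hX : MemLp X 2 μ) (R b : ℝ) :
    (∫ ω, (X ω - R) ^ 2 ∂μ) - (∫ ω, ((|X ω - b| + b) - R) ^ 2 ∂μ) =
      4 * (R - b) * ∫ ω, max (b - X ω) 0 ∂μ := by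
  have h1 : Integrable (fun ω => (X ω - R) ^ 2) μ :=
    (hX.sub (memLp_const R)).integrable_sq
  have h2 : Integrable (fun ω => ((|X ω - b| + b) - R) ^ 2) μ :=
    ((((hX.sub (memLp_const b)).abs.add (memLp_const b)).sub
      (memLp_const R)).integrable_sq)
  rw [← integral_sub h1 h2]
  have key : ∀ ω, (X ω - R) ^ 2 - ((|X ω - b| + b) - R) ^ 2
      = 4 * (R - b) * max (b - X ω) 0 := by
    intro ω
    rcases le_total b (X ω) with h | h
    · rw [abs_of_nonneg (by linarith), max_eq_right (by linarith)]
      ring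
    · rw [abs_of_nonpos (by linarith), max_eq_left (by linarith)]
      ring
  simp_rw [key]
  rw [integral_const_mul]
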